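/- arXiv:2208.02000 — 3 statements merged into one kernel-verified Lean document; each statement's English description precedes it below -/
import Mathlib

section
/- Let G be an undirected weighted graph with nonnegative edge weights, and let f(S,T) denote the minimum cost of an S-T cut. Let v_0, v_1, ..., v_k be distinct vertices with k ≥ 1. If f({v_0,...,v_{k-1}}, v_k) ≤ f({v_0,...,v_{i-1}}, v_i) for all i ∈ [k], then f({v_0,...,v_{k-1}}, v_k) = f({v_0}, v_k). -/
open Finset

variable {V : Type*} [Fintype V] [DecidableEq V]

noncomputable section

/-- Cost of the cut `U`: total weight of edges crossing between `U` and its complement. -/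
def cutCost (w : V → V → ℝ) (U : Finset V) : ℝ :=
  ∑ u ∈ U, ∑ v ∈ Uᶜ, w u v

/-- `U` is an `S`-`T` cut: `T ⊆ U ⊆ V − S`. -/
def IsCut (S T U : Finset V) : Prop := T ⊆ U ∧ Disjoint U S

/-- Minimum cost of an `S`-`T` cut. -/
def minCutCost (w : V → V → ℝ) (S T : Finset V) : ℝ :=
  sInf (cutCost w '' {U : Finset V | IsCut S T U})

/-- `U` is a minimum `S`-`T` cut. -/
def IsMinCut (w : V → V → ℝ) (S T U : Finset V) : Prop :=
  IsCut S T U ∧ cutCost w U = minCutCost w S T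

lemma minCutCost_le_of_isCut (w : V → V → ℝ) {S T U : Finset V} (hU : IsCut S T U) :
    minCutCost w S T ≤ cutCost w U := by
  apply csInf_le ((Set.toFinite {U : Finset V | IsCut S T U}).image _).bddBelow
  exact ⟨U, hU, rfl⟩

lemma exists_minCut (w : V → V → ℝ) {S T : Finset V} (h : ∃ U, IsCut S T U) :
    ∃ U, IsCut S T U ∧ cutCost w U = minCutCost w S T := by
  have hfin : (cutCost w '' {U : Finset V | IsCut S T U}).Finite :=
    (Set.toFinite _).image _
  obtain ⟨U0, hU0⟩ := h
  have hne : (cutCost w '' {U : Finset V | IsCut S T U}).Nonempty :=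
    ⟨_, U0, hU0, rfl⟩
  obtain ⟨U, hU, hc⟩ := hne.csInf_mem hfin
  exact ⟨U, hU, hc⟩

/-- Goldberg's lemma: if `f({v_0,...,v_{k-1}}, v_k) ≤ f({v_0,...,v_{i-1}}, v_i)` for all
`i ∈ [k]`, then `f({v_0,...,v_{k-1}}, v_k) = f(v_0, v_k)`. -/
theorem goldberg_lemma (w : V → V → ℝ) (hw : ∀ u v, 0 ≤ w u v)
    (hsym : ∀ u v, w u v = w v u)
    (k : ℕ) (hk : 1 ≤ k) (v : ℕ → V)
    (hinj : ∀ i j, i ≤ k → j ≤ k → v i = v j → i = j)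
    (h : ∀ i, 1 ≤ i → i ≤ k →
      minCutCost w ((Finset.range k).image v) {v k} ≤
        minCutCost w ((Finset.range i).image v) {v i}) :
    minCutCost w ((Finset.range k).image v) {v k} = minCutCost w {v 0} {v k} := by
  set Sk := (Finset.range k).image v with hSk
  -- v k ∉ Sk
  have hvk : v k ∉ Sk := by
    simp only [hSk, Finset.mem_image, Finset.mem_range]
    rintro ⟨i, hi, hvi⟩
    exact absurd (hinj i k hi.le le_rfl hvi) hi.ne
  -- existence of cuts
  have hcutk : ∃ U, IsCut Sk {v k} U :=
    ⟨Skᶜ, by simpa [Finset.mem_compl] using hvk, disjoint_compl_left⟩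
  have hv0k : v 0 ≠ v k := fun e => absurd (hinj 0 k (by omega) le_rfl e) (by omega)
  have hcut0 : ∃ U, IsCut {v 0} {v k} U :=
    ⟨{v 0}ᶜ, by simpa using hv0k, disjoint_compl_left⟩
  -- easy direction
  obtain ⟨A, hA, hAc⟩ := exists_minCut w hcutk
  have hle : minCutCost w {v 0} {v k} ≤ minCutCost w Sk {v k} := by
    have hA0 : IsCut {v 0} {v k} A := by
      refine ⟨hA.1, hA.2.mono_right ?_⟩
      intro x hx
      simp only [Finset.mem_singleton] at hx
      subst hx
      simp only [hSk, Finset.mem_image, Finset.mem_range]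
      exact ⟨0, hk, rfl⟩
    calc minCutCost w {v 0} {v k} ≤ cutCost w A := minCutCost_le_of_isCut w hA0
      _ = minCutCost w Sk {v k} := hAc
  -- hard direction
  obtain ⟨U, hU, hUc⟩ := exists_minCut w hcut0
  have hv0U : v 0 ∉ U := by
    have := hU.2
    rw [Finset.disjoint_left] at this
    intro hmem
    exact this hmem (Finset.mem_singleton_self _)
  have hge : minCutCost w Sk {v k} ≤ minCutCost w {v 0} {v k} := by
    by_cases hdisj : Disjoint U Sk
    · have : IsCut Sk {v k} U := ⟨hU.1, hdisj⟩
      calc minCutCost w Sk {v k} ≤ cutCost w U := minCutCost_le_of_isCut w this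
        _ = minCutCost w {v 0} {v k} := hUc
    · -- some v i with i < k lies in U; take the smallest such i
      have hex : ∃ i, i < k ∧ v i ∈ U := by
        rw [Finset.disjoint_left] at hdisj
        push_neg at hdisj
        obtain ⟨x, hxU, hxS⟩ := hdisj
        simp only [hSk, Finset.mem_image, Finset.mem_range] at hxS
        obtain ⟨i, hi, rfl⟩ := hxS
        exact ⟨i, hi, hxU⟩
      classical
      let i := Nat.find hex
      obtain ⟨hik, hiU⟩ : i < k ∧ v i ∈ U := Nat.find_spec hex
      have hi1 : 1 ≤ i := by
        rcases Nat.eq_zero_or_pos i with h0 | h0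
        · exact absurd (h0 ▸ hiU) hv0U
        · exact h0
      -- U is an S_i - v i cut
      have hUi : IsCut ((Finset.range i).image v) {v i} U := by
        refine ⟨by simpa using hiU, ?_⟩
        rw [Finset.disjoint_left]
        intro x hxU hxS
        simp only [Finset.mem_image, Finset.mem_range] at hxS
        obtain ⟨j, hj, rfl⟩ := hxS
        exact Nat.find_min hex hj ⟨hj.trans hik, hxU⟩
      calc minCutCost w Sk {v k}
          ≤ minCutCost w ((Finset.range i).image v) {v i} := h i hi1 hik.le
        _ ≤ cutCost w U := minCutCost_le_of_isCut w hUi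
        _ = minCutCost w {v 0} {v k} := hUc
  linarith
end
end

section
/- In a finite undirected weighted graph with nonnegative weights, for a fixed vertex s, the family of minimal minimum s-v cuts {C_{sv} : v ≠ s} is laminar: for any distinct u, v ≠ s, the sets C_{su} and C_{sv} are either disjoint or one contains the other. -/
open Finset

variable {V : Type*} [Fintype V] [DecidableEq V]

noncomputable section

/-- Indicator that `U` separates `x` from `y`. -/
def sep (U : Finset V) (x y : V) : ℝ :=
  if (x ∈ U ∧ y ∉ U) ∨ (y ∈ U ∧ x ∉ U) then 1 else 0

lemma cutCost_eq_sum_univ (w : V → V → ℝ) (U : Finset V) :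
    cutCost w U = ∑ x : V, ∑ y : V, if x ∈ U ∧ y ∉ U then w x y else 0 := by
  symm
  calc ∑ x : V, ∑ y : V, (if x ∈ U ∧ y ∉ U then w x y else 0)
      = ∑ x : V, (if x ∈ U then ∑ y ∈ Uᶜ, w x y else 0) := by
        refine Finset.sum_congr rfl fun x _ => ?_
        by_cases hx : x ∈ U
        · simp only [hx, true_and, if_true]
          rw [show (Uᶜ : Finset V) = Finset.univ ∩ Uᶜ by rw [Finset.univ_inter],
            ← Finset.sum_ite_mem]
          exact Finset.sum_congr rfl fun y _ => by simp [Finset.mem_compl]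
        · simp [hx]
    _ = ∑ x ∈ U, ∑ y ∈ Uᶜ, w x y := by
        rw [Finset.sum_ite_mem, Finset.univ_inter]
    _ = cutCost w U := rfl

lemma two_mul_cutCost (w : V → V → ℝ) (hsym : ∀ u v, w u v = w v u) (U : Finset V) :
    2 * cutCost w U = ∑ x : V, ∑ y : V, sep U x y * w x y := by
  have h1 : cutCost w U = ∑ x : V, ∑ y : V, if x ∈ U ∧ y ∉ U then w x y else 0 :=
    cutCost_eq_sum_univ w U
  have h2 : cutCost w U = ∑ x : V, ∑ y : V, if y ∈ U ∧ x ∉ U then w x y else 0 := by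
    rw [h1, Finset.sum_comm]
    exact Finset.sum_congr rfl fun x _ => Finset.sum_congr rfl fun y _ => by
      rw [hsym]
  rw [two_mul]
  nth_rewrite 1 [h1]
  nth_rewrite 1 [h2]
  rw [← Finset.sum_add_distrib]
  refine Finset.sum_congr rfl fun x _ => ?_
  rw [← Finset.sum_add_distrib]
  refine Finset.sum_congr rfl fun y _ => ?_
  unfold sep
  by_cases hx : x ∈ U <;> by_cases hy : y ∈ U <;> simp [hx, hy]

lemma sep_submod (A B : Finset V) (x y : V) :
    sep (A ∩ B) x y + sep (A ∪ B) x y ≤ sep A x y + sep B x y := by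
  unfold sep
  by_cases ha : x ∈ A <;> by_cases hb : x ∈ B <;> by_cases hc : y ∈ A <;>
    by_cases hd : y ∈ B <;>
    simp [ha, hb, hc, hd, Finset.mem_inter, Finset.mem_union] <;> norm_num

lemma sep_posimod (A B : Finset V) (x y : V) :
    sep (A \ B) x y + sep (B \ A) x y ≤ sep A x y + sep B x y := by
  unfold sep
  by_cases ha : x ∈ A <;> by_cases hb : x ∈ B <;> by_cases hc : y ∈ A <;>
    by_cases hd : y ∈ B <;>
    simp [ha, hb, hc, hd, Finset.mem_sdiff] <;> norm_num

lemma cutCost_submod (w : V → V → ℝ) (hw : ∀ u v, 0 ≤ w u v)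
    (hsym : ∀ u v, w u v = w v u) (A B : Finset V) :
    cutCost w (A ∩ B) + cutCost w (A ∪ B) ≤ cutCost w A + cutCost w B := by
  have key : 2 * cutCost w (A ∩ B) + 2 * cutCost w (A ∪ B)
      ≤ 2 * cutCost w A + 2 * cutCost w B := by
    rw [two_mul_cutCost w hsym, two_mul_cutCost w hsym, two_mul_cutCost w hsym,
      two_mul_cutCost w hsym, ← Finset.sum_add_distrib, ← Finset.sum_add_distrib]
    refine Finset.sum_le_sum fun x _ => ?_
    rw [← Finset.sum_add_distrib, ← Finset.sum_add_distrib]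
    refine Finset.sum_le_sum fun y _ => ?_
    have := mul_le_mul_of_nonneg_right (sep_submod A B x y) (hw x y)
    linarith [this]
  linarith

lemma cutCost_posimod (w : V → V → ℝ) (hw : ∀ u v, 0 ≤ w u v)
    (hsym : ∀ u v, w u v = w v u) (A B : Finset V) :
    cutCost w (A \ B) + cutCost w (B \ A) ≤ cutCost w A + cutCost w B := by
  have key : 2 * cutCost w (A \ B) + 2 * cutCost w (B \ A)
      ≤ 2 * cutCost w A + 2 * cutCost w B := by
    rw [two_mul_cutCost w hsym, two_mul_cutCost w hsym, two_mul_cutCost w hsym,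
      two_mul_cutCost w hsym, ← Finset.sum_add_distrib, ← Finset.sum_add_distrib]
    refine Finset.sum_le_sum fun x _ => ?_
    rw [← Finset.sum_add_distrib, ← Finset.sum_add_distrib]
    refine Finset.sum_le_sum fun y _ => ?_
    have := mul_le_mul_of_nonneg_right (sep_posimod A B x y) (hw x y)
    linarith [this]
  linarith

lemma minCutCost_le (w : V → V → ℝ) (S T U : Finset V) (h : IsCut S T U) :
    minCutCost w S T ≤ cutCost w U := by
  apply csInf_le (Set.Finite.bddBelow (Set.toFinite _))
  exact ⟨U, h, rfl⟩

/-- For a fixed source `s`, the family of minimal minimum `s`-`v` cuts is laminar. -/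
theorem minimal_minCuts_laminar (w : V → V → ℝ) (hw : ∀ u v, 0 ≤ w u v)
    (hsym : ∀ u v, w u v = w v u)
    (s u v : V) (hu : u ≠ s) (hv : v ≠ s) (huv : u ≠ v)
    (Cu Cv : Finset V)
    (hCu : IsMinCut w {s} {u} Cu)
    (hCumin : ∀ U, IsMinCut w {s} {u} U → U ⊆ Cu → U = Cu)
    (hCv : IsMinCut w {s} {v} Cv)
    (hCvmin : ∀ U, IsMinCut w {s} {v} U → U ⊆ Cv → U = Cv) :
    Disjoint Cu Cv ∨ Cu ⊆ Cv ∨ Cv ⊆ Cu := by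
  obtain ⟨⟨huCu, hdu⟩, hequ⟩ := hCu
  obtain ⟨⟨hvCv, hdv⟩, heqv⟩ := hCv
  rw [Finset.singleton_subset_iff] at huCu hvCv
  by_cases h1 : u ∈ Cv
  · -- Cu ∩ Cv is a min s-u cut, so Cu ⊆ Cv
    right; left
    have hcutI : IsCut {s} {u} (Cu ∩ Cv) :=
      ⟨Finset.singleton_subset_iff.2 (Finset.mem_inter.2 ⟨huCu, h1⟩),
        hdu.mono_left Finset.inter_subset_left⟩
    have hcutU : IsCut {s} {v} (Cu ∪ Cv) :=
      ⟨Finset.singleton_subset_iff.2 (Finset.mem_union_right _ hvCv),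
        Finset.disjoint_union_left.2 ⟨hdu, hdv⟩⟩
    have hI := minCutCost_le w {s} {u} (Cu ∩ Cv) hcutI
    have hU := minCutCost_le w {s} {v} (Cu ∪ Cv) hcutU
    have hsub := cutCost_submod w hw hsym Cu Cv
    have heq : cutCost w (Cu ∩ Cv) = minCutCost w {s} {u} := by linarith
    have := hCumin (Cu ∩ Cv) ⟨hcutI, heq⟩ Finset.inter_subset_left
    exact Finset.inter_eq_left.mp this
  by_cases h2 : v ∈ Cu
  · right; right
    have hcutI : IsCut {s} {v} (Cu ∩ Cv) :=
      ⟨Finset.singleton_subset_iff.2 (Finset.mem_inter.2 ⟨h2, hvCv⟩),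
        hdv.mono_left Finset.inter_subset_right⟩
    have hcutU : IsCut {s} {u} (Cu ∪ Cv) :=
      ⟨Finset.singleton_subset_iff.2 (Finset.mem_union_left _ huCu),
        Finset.disjoint_union_left.2 ⟨hdu, hdv⟩⟩
    have hI := minCutCost_le w {s} {v} (Cu ∩ Cv) hcutI
    have hU := minCutCost_le w {s} {u} (Cu ∪ Cv) hcutU
    have hsub := cutCost_submod w hw hsym Cu Cv
    have heq : cutCost w (Cu ∩ Cv) = minCutCost w {s} {v} := by linarith
    have := hCvmin (Cu ∩ Cv) ⟨hcutI, heq⟩ Finset.inter_subset_right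
    exact Finset.inter_eq_right.mp this
  · -- u ∉ Cv and v ∉ Cu: disjoint
    left
    have hcutA : IsCut {s} {u} (Cu \ Cv) :=
      ⟨Finset.singleton_subset_iff.2 (Finset.mem_sdiff.2 ⟨huCu, h1⟩),
        hdu.mono_left Finset.sdiff_subset⟩
    have hcutB : IsCut {s} {v} (Cv \ Cu) :=
      ⟨Finset.singleton_subset_iff.2 (Finset.mem_sdiff.2 ⟨hvCv, h2⟩),
        hdv.mono_left Finset.sdiff_subset⟩
    have hA := minCutCost_le w {s} {u} (Cu \ Cv) hcutA
    have hB := minCutCost_le w {s} {v} (Cv \ Cu) hcutB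
    have hpos := cutCost_posimod w hw hsym Cu Cv
    have heq : cutCost w (Cu \ Cv) = minCutCost w {s} {u} := by linarith
    have := hCumin (Cu \ Cv) ⟨hcutA, heq⟩ Finset.sdiff_subset
    exact Finset.sdiff_eq_self_iff_disjoint.mp this
end
end

section
/- Let G be a finite undirected weighted graph, X a set of vertices, and suppose for each unordered pair {u,v} of distinct vertices in X a set C_{uv} ⊆ V with v ∈ C_{uv}, u ∉ C_{uv} is given, where C_{vu} = V − C_{uv}, together with a strict total order ≺ on subsets of V such that exactly one of C_{uv} ≺ C_{vu} or C_{vu} ≺ C_{uv} holds, and with the property that C_{uv} is a minimum u-v cut and ≺ refines comparison by cut cost. Define u ⊑ v iff u = v or C_{vu} ≺ C_{uv}. Then ⊑ is a total order on X. (Key step: for any distinct a,b,c ∈ X, if C_{ab} is smallest among the six cuts C_{xy} w.r.t. ≺, then either c ∈ C_{ab} and C_{ac} = C_{ab}, or c ∉ C_{ab} and C_{cb} = C_{ab}; in either case ⊑ is not cyclic on {a,b,c}.) -/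
open Finset

variable {V : Type*} [Fintype V] [DecidableEq V]

noncomputable section

/-- Key lemma: if `C b a` is the `≺`-smallest of the six cuts on a triple `{a,b,c}`,
then the cyclic relations `C c b ≺ C b c` and `C a c ≺ C c a` are impossible. -/
theorem key_cycle_lemma (w : V → V → ℝ) (X : Finset V)
    (lt : Finset V → Finset V → Prop)
    (C : V → V → Finset V)
    (hC_cut : ∀ u ∈ X, ∀ v ∈ X, u ≠ v → IsMinCut w {u} {v} (C u v))
    (hC_min : ∀ u ∈ X, ∀ v ∈ X, u ≠ v → ∀ U : Finset V, IsCut {u} {v} U →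
      U = C u v ∨ lt (C u v) U)
    {a b c : V} (ha : a ∈ X) (hb : b ∈ X) (hc : c ∈ X)
    (hba : b ≠ a) (hbc : b ≠ c) (hca : c ≠ a)
    (h2 : lt (C c b) (C b c)) (h3 : lt (C a c) (C c a))
    (hm1 : ¬ lt (C b c) (C b a)) (hm2 : ¬ lt (C c b) (C b a))
    (hm3 : ¬ lt (C c a) (C b a)) (hm4 : ¬ lt (C a c) (C b a)) : False := by
  obtain ⟨⟨hsub, hdisj⟩, -⟩ := hC_cut b hb a ha hba
  by_cases hcm : c ∈ C b a
  · -- `C b a` is a `b`-`c` cut, hence equals `C b c`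
    rcases hC_min b hb c hc hbc (C b a)
        ⟨Finset.singleton_subset_iff.2 hcm, hdisj⟩ with heq | hl
    · exact hm2 (by rwa [← heq] at h2)
    · exact hm1 hl
  · -- `C b a` is a `c`-`a` cut, hence equals `C c a`
    rcases hC_min c hc a ha hca (C b a)
        ⟨hsub, Finset.disjoint_singleton_right.2 hcm⟩ with heq | hl
    · exact hm4 (by rwa [← heq] at h3)
    · exact hm3 hl

/-- The relation `u ⊑ v ↔ u = v ∨ C_{vu} ≺ C_{uv}` defined from minimal (w.r.t. a strict
total order `≺` refining cut cost) minimum cuts is a total order on `X`. -/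
theorem sqsubseteq_total_order (w : V → V → ℝ) (hw : ∀ u v, 0 ≤ w u v)
    (hsym : ∀ u v, w u v = w v u)
    (X : Finset V)
    (lt : Finset V → Finset V → Prop)
    (hlt_irrefl : ∀ A, ¬ lt A A)
    (hlt_trans : ∀ A B C, lt A B → lt B C → lt A C)
    (hlt_total : ∀ A B : Finset V, A ≠ B → lt A B ∨ lt B A)
    (hlt_cost : ∀ A B : Finset V, cutCost w A < cutCost w B → lt A B)
    (C : V → V → Finset V)
    (hC_compl : ∀ u ∈ X, ∀ v ∈ X, u ≠ v → C v u = (C u v)ᶜ)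
    (hC_cut : ∀ u ∈ X, ∀ v ∈ X, u ≠ v → IsMinCut w {u} {v} (C u v))
    (hC_min : ∀ u ∈ X, ∀ v ∈ X, u ≠ v → ∀ U : Finset V, IsCut {u} {v} U →
      U = C u v ∨ lt (C u v) U) :
    (∀ a ∈ X, ∀ b ∈ X, (a = b ∨ lt (C b a) (C a b)) → (b = a ∨ lt (C a b) (C b a)) → a = b) ∧
    (∀ a ∈ X, ∀ b ∈ X, ∀ c ∈ X, (a = b ∨ lt (C b a) (C a b)) →
      (b = c ∨ lt (C c b) (C b c)) → (a = c ∨ lt (C c a) (C a c))) ∧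
    (∀ a ∈ X, ∀ b ∈ X, (a = b ∨ lt (C b a) (C a b)) ∨ (b = a ∨ lt (C a b) (C b a))) := by
  have asymm : ∀ A B, lt A B → ¬ lt B A := fun A B h h' =>
    hlt_irrefl A (hlt_trans _ _ _ h h')
  have hne_cuts : ∀ a ∈ X, ∀ b ∈ X, a ≠ b → C a b ≠ C b a := by
    intro a ha b hb hab heq
    obtain ⟨⟨hsub1, -⟩, -⟩ := hC_cut a ha b hb hab
    obtain ⟨⟨-, hdisj2⟩, -⟩ := hC_cut b hb a ha hab.symm
    have hb1 : b ∈ C a b := Finset.singleton_subset_iff.1 hsub1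
    have hb2 : b ∉ C b a := Finset.disjoint_singleton_right.1 hdisj2
    exact hb2 (heq ▸ hb1)
  refine ⟨?_, ?_, ?_⟩
  · -- antisymmetry
    rintro a ha b hb (rfl | h1) h2
    · rfl
    · rcases h2 with rfl | h2
      · rfl
      · exact absurd h2 (asymm _ _ h1)
  · -- transitivity
    rintro a ha b hb c hc (rfl | h1) hbc
    · exact hbc
    rcases hbc with rfl | h2
    · exact Or.inr h1
    have hab : a ≠ b := by rintro rfl; exact hlt_irrefl _ h1
    have hbc' : b ≠ c := by rintro rfl; exact hlt_irrefl _ h2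
    by_cases hac : a = c
    · exact Or.inl hac
    right
    by_contra h3'
    have h3 : lt (C a c) (C c a) :=
      (hlt_total _ _ (hne_cuts a ha c hc hac)).resolve_right h3'
    -- cyclic situation: derive a contradiction via the key lemma
    set S1 := C b a with hS1
    set S2 := C c b with hS2
    set S3 := C a c with hS3
    by_cases h21 : lt S2 S1
    · by_cases h32 : lt S3 S2
      · -- min is S3 = C a c ; triple (c,a,b)
        have hns1 : ¬ lt S1 S3 := fun h =>
          hlt_irrefl _ (hlt_trans _ _ _ h (hlt_trans _ _ _ h32 h21))
        have hns2 : ¬ lt S2 S3 := asymm _ _ h32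
        exact key_cycle_lemma w X lt C hC_cut hC_min hc ha hb
          hac hab hbc' h1 h2
          (fun h => hns1 (hlt_trans _ _ _ h1 h)) hns1
          (fun h => hns2 (hlt_trans _ _ _ h2 h)) hns2
      · -- min is S2 = C c b ; triple (b,c,a)
        exact key_cycle_lemma w X lt C hC_cut hC_min hb hc ha
          hbc'.symm (Ne.symm hac) hab h3 h1
          (fun h => h32 (hlt_trans _ _ _ h3 h)) h32
          (fun h => hlt_irrefl _ (hlt_trans _ _ _ h21 (hlt_trans _ _ _ h1 h)))
          (asymm _ _ h21)
    · by_cases h31 : lt S3 S1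
      · -- min is S3 = C a c ; triple (c,a,b)
        have hns1 : ¬ lt S1 S3 := asymm _ _ h31
        have hns2 : ¬ lt S2 S3 := fun h => h21 (hlt_trans _ _ _ h h31)
        exact key_cycle_lemma w X lt C hC_cut hC_min hc ha hb
          hac hab hbc' h1 h2
          (fun h => hns1 (hlt_trans _ _ _ h1 h)) hns1
          (fun h => hns2 (hlt_trans _ _ _ h2 h)) hns2
      · -- min is S1 = C b a ; triple (a,b,c)
        exact key_cycle_lemma w X lt C hC_cut hC_min ha hb hc
          hab.symm hbc' (Ne.symm hac) h2 h3
          (fun h => h21 (hlt_trans _ _ _ h2 h)) h21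
          (fun h => h31 (hlt_trans _ _ _ h3 h)) h31
  · -- totality
    intro a ha b hb
    by_cases hab : a = b
    · exact Or.inl (Or.inl hab)
    · rcases hlt_total (C a b) (C b a) (hne_cuts a ha b hb hab) with h | h
      · exact Or.inr (Or.inr h)
      · exact Or.inl (Or.inr h)
end
end
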